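/- arXiv:1302.6124 — 3 statements merged into one kernel-verified Lean document; each statement's English description precedes it below -/
import Mathlib

section
/- Let N ∈ ℕ and let (φ_j)_{j=1}^N and (ψ_k)_{k∈ℕ} be orthonormal families in a Hilbert space, with (ψ_k) an orthonormal basis. Then the modulus of the determinant of the N×N overlap matrix (⟨φ_j, ψ_k⟩)_{j,k=1,…,N} satisfies |det(⟨φ_j, ψ_k⟩)| ≤ exp(−(1/2) Σ_{j=1}^N Σ_{k=N+1}^∞ |⟨φ_j, ψ_k⟩|²). -/
open scoped InnerProductSpace
open Matrix
open scoped ComplexOrder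

/-- Hadamard bound on the ground-state overlap: for an orthonormal family
`φ : Fin N → H` and a Hilbert (orthonormal) basis `ψ : ℕ → H` of a complex
Hilbert space `H`, the modulus of the determinant of the overlap matrix
`(⟪φ j, ψ k⟫)_{j,k < N}` is at most
`exp(-(1/2) ∑_{j<N} ∑_{k ≥ N} |⟪φ j, ψ k⟫|²)`. -/
theorem stmt0 {H : Type*} [NormedAddCommGroup H] [InnerProductSpace ℂ H] [CompleteSpace H]
    (N : ℕ) (φ : Fin N → H) (hφ : Orthonormal ℂ φ)
    (ψ : HilbertBasis ℕ ℂ H) :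
    ‖
        (Matrix.det (Matrix.of fun j k : Fin N => ⟪φ j, ψ (k : ℕ)⟫_ℂ))‖ ≤
      Real.exp (-(1/2) * ∑ j : Fin N,
        ∑' k : {k : ℕ // N ≤ k}, ‖⟪φ j, ψ (k : ℕ)⟫_ℂ‖ ^ 2) := by
  classical
  set M : Matrix (Fin N) (Fin N) ℂ := Matrix.of fun j k : Fin N => ⟪φ j, ψ (k : ℕ)⟫_ℂ with hMdef
  set t : Fin N → ℝ := fun j => ∑' k : {k : ℕ // N ≤ k}, ‖⟪φ j, ψ (k : ℕ)⟫_ℂ‖ ^ 2 with htdef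
  set S : ℝ := ∑ j : Fin N, t j with hSdef
  have hpt : ∀ (j : Fin N) (k : ℕ),
      ⟪φ j, ψ k⟫_ℂ * ⟪ψ k, φ j⟫_ℂ = ((‖⟪φ j, ψ k⟫_ℂ‖ ^ 2 : ℝ) : ℂ) := by
    intro j k
    have h : ⟪ψ k, φ j⟫_ℂ = (starRingEnd ℂ) ⟪φ j, ψ k⟫_ℂ := (inner_conj_symm _ _).symm
    rw [h, Complex.mul_conj, Complex.normSq_eq_norm_sq]
  have hsum : ∀ j : Fin N, Summable (fun k : ℕ => ‖⟪φ j, ψ k⟫_ℂ‖ ^ 2) := by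
    intro j
    have h := ψ.summable_inner_mul_inner (φ j) (φ j)
    simp_rw [hpt j] at h
    exact Complex.summable_ofReal.mp h
  have hpar : ∀ j : Fin N, ∑' k : ℕ, ‖⟪φ j, ψ k⟫_ℂ‖ ^ 2 = 1 := by
    intro j
    have h1 := ψ.tsum_inner_mul_inner (φ j) (φ j)
    simp_rw [hpt j] at h1
    rw [← Complex.ofReal_tsum] at h1
    have h2 : ⟪φ j, φ j⟫_ℂ = 1 := by
      rw [inner_self_eq_norm_sq_to_K, hφ.1 j]; norm_num
    rw [h2] at h1
    exact_mod_cast h1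
  have hsplit : ∀ j : Fin N, ∑ k ∈ Finset.range N, ‖⟪φ j, ψ k⟫_ℂ‖ ^ 2 = 1 - t j := by
    intro j
    have h := Summable.sum_add_tsum_compl (s := Finset.range N)
      (f := fun k : ℕ => ‖⟪φ j, ψ k⟫_ℂ‖ ^ 2) (hsum j)
    have he : (∑' k : ↑((Finset.range N : Finset ℕ) : Set ℕ)ᶜ, ‖⟪φ j, ψ (k : ℕ)⟫_ℂ‖ ^ 2)
        = t j :=
      Equiv.tsum_eq (Equiv.subtypeEquivRight
        (p := fun k : ℕ => k ∈ ((Finset.range N : Finset ℕ) : Set ℕ)ᶜ)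
        (q := fun k : ℕ => N ≤ k)
        (fun k => by simp [Finset.mem_range, not_lt]))
        (fun k : {k : ℕ // N ≤ k} => ‖⟪φ j, ψ (k : ℕ)⟫_ℂ‖ ^ 2)
    rw [he, hpar j] at h
    linarith
  have ht_nonneg : ∀ j, 0 ≤ t j := fun j => tsum_nonneg (fun k => by positivity)
  set G : Matrix (Fin N) (Fin N) ℂ := M * Mᴴ with hGdef
  have hG : G.PosSemidef := Matrix.posSemidef_self_mul_conjTranspose M
  have hH : G.IsHermitian := hG.1
  set E : Fin N → ℝ := hH.eigenvalues with hEdef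
  -- trace of G
  have hreal : ∑ j : Fin N, ∑ k : Fin N, ‖⟪φ j, ψ (k : ℕ)⟫_ℂ‖ ^ 2 = (N : ℝ) - S := by
    have h2 : ∀ j : Fin N, ∑ k : Fin N, ‖⟪φ j, ψ (k : ℕ)⟫_ℂ‖ ^ 2 = 1 - t j := by
      intro j
      rw [Fin.sum_univ_eq_sum_range (fun k => ‖⟪φ j, ψ k⟫_ℂ‖ ^ 2) N]
      exact hsplit j
    rw [Finset.sum_congr rfl fun j _ => h2 j, Finset.sum_sub_distrib]
    simp [hSdef]
  have htrace : G.trace = (((N : ℝ) - S : ℝ) : ℂ) := by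
    have h1 : G.trace = ∑ j : Fin N, ∑ k : Fin N, ((‖⟪φ j, ψ (k : ℕ)⟫_ℂ‖ ^ 2 : ℝ) : ℂ) := by
      simp only [Matrix.trace, Matrix.diag, hGdef, Matrix.mul_apply, Matrix.conjTranspose_apply,
        hMdef, Matrix.of_apply]
      refine Finset.sum_congr rfl fun j _ => Finset.sum_congr rfl fun k _ => ?_
      rw [Complex.star_def, Complex.mul_conj, Complex.normSq_eq_norm_sq]
    rw [h1, ← hreal]
    push_cast
    rfl
  have htr2 : G.trace = ((∑ i, E i : ℝ) : ℂ) := by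
    conv_lhs => rw [hH.spectral_theorem]
    rw [Unitary.conjStarAlgAut_apply, Matrix.trace_mul_cycle]
    rw [Matrix.UnitaryGroup.star_mul_self]
    rw [one_mul, Matrix.trace_diagonal]
    push_cast
    rfl
  have hsumE : ∑ i, E i = (N : ℝ) - S := by
    have := htr2.symm.trans htrace
    exact_mod_cast this
  have hE0 : ∀ i, 0 ≤ E i := fun i => hG.eigenvalues_nonneg i
  have hprod : ∏ i, E i ≤ Real.exp (-S) := by
    calc ∏ i, E i ≤ ∏ i, Real.exp (E i - 1) :=
          Finset.prod_le_prod (fun i _ => hE0 i)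
            (fun i _ => by linarith [Real.add_one_le_exp (E i - 1)])
      _ = Real.exp (∑ i, (E i - 1)) := by rw [Real.exp_sum]
      _ = Real.exp (-S) := by
          congr 1
          rw [Finset.sum_sub_distrib, hsumE]
          simp
  have habs : ‖M.det‖ ^ 2 = ∏ i, E i := by
    have h3 : G.det = ((‖M.det‖ ^ 2 : ℝ) : ℂ) := by
      rw [hGdef, Matrix.det_mul, Matrix.det_conjTranspose, Complex.star_def,
        Complex.mul_conj, Complex.normSq_eq_norm_sq]
    have h4 := hH.det_eq_prod_eigenvalues
    rw [h3] at h4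
    have h5 : ((‖M.det‖ ^ 2 : ℝ) : ℂ) = ((∏ i, E i : ℝ) : ℂ) := by
      rw [h4]; push_cast; rfl
    exact_mod_cast h5
  have habs2 : ‖M.det‖ ^ 2 ≤ Real.exp (-S) := habs ▸ hprod
  have h5 : Real.exp (-(1/2) * S) ^ 2 = Real.exp (-S) := by
    rw [sq, ← Real.exp_add]; ring_nf
  nlinarith [norm_nonneg M.det, Real.exp_pos (-(1/2) * S), habs2, h5]
end

section
/- Let A > 0 and let κ₁, κ₂ ∈ L¹_loc(ℝ) be non-negative with 0 a Lebesgue point of both κ₁ and κ₂ (so that C₁ := sup_{x∈(−A,0)} (−x)^{−1}∫_x^0 κ₁ and C₂ := sup_{y∈(0,1)} y^{−1}∫_0^y κ₂ are finite). Then for all η ∈ (0,1): ∫_{−A}^0 ∫_0^η κ₁(x)κ₂(y)/(y−x) dy dx ≤ C₁C₂ [A ln(1 + η/A) + η ln(1 + A/η)]. In particular, the double integral is O(η |ln η|) as η ↓ 0. -/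
open MeasureTheory intervalIntegral


lemma ii_Ioo {f : ℝ → ℝ} {a b : ℝ} (h : a ≤ b) :
    ∫ t in Set.Ioo a b, f t = ∫ t in a..b, f t := by
  rw [intervalIntegral.integral_of_le h, integral_Ioc_eq_integral_Ioo]

lemma lint_ofReal_cont {f : ℝ → ℝ} {a b : ℝ} (hab : a ≤ b)
    (hf : ContinuousOn f (Set.Icc a b)) (h0 : ∀ t ∈ Set.Icc a b, 0 ≤ f t) :
    ∫⁻ t in Set.Ioo a b, ENNReal.ofReal (f t) = ENNReal.ofReal (∫ t in a..b, f t) := by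
  rw [← ii_Ioo hab]
  exact (ofReal_integral_eq_lintegral_ofReal
    ((hf.integrableOn_Icc).mono_set Set.Ioo_subset_Icc_self)
    ((ae_restrict_iff' measurableSet_Ioo).2 (ae_of_all _ fun t ht =>
      h0 t (Set.Ioo_subset_Icc_self ht)))).symm

lemma klint {k : ℝ → ℝ} (hk : LocallyIntegrable k) (h0 : ∀ y, 0 ≤ k y) {a b : ℝ} (hab : a ≤ b) :
    ∫⁻ y in Set.Ioo a b, ENNReal.ofReal (k y) = ENNReal.ofReal (∫ y in a..b, k y) := by
  rw [← ii_Ioo hab]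
  exact (ofReal_integral_eq_lintegral_ofReal
    ((hk.integrableOn_isCompact isCompact_Icc).mono_set Set.Ioo_subset_Icc_self)
    (ae_of_all _ h0)).symm

lemma calc1 {x y η : ℝ} (hxy : x < y) (hyη : y ≤ η) :
    ∫ t in y..η, ((t - x)^2)⁻¹ = (y - x)⁻¹ - (η - x)⁻¹ := by
  have key : ∀ t ∈ Set.uIcc y η, HasDerivAt (fun u => -(u - x)⁻¹) (((t - x)^2)⁻¹) t := by
    intro t ht
    rw [Set.uIcc_of_le hyη] at ht
    have htx : t - x ≠ 0 := by have := ht.1; intro h; linarith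
    have h1 : HasDerivAt (fun u : ℝ => u - x) 1 t := (hasDerivAt_id t).sub_const x
    have h2 := (h1.inv htx).neg
    refine h2.congr_deriv ?_
    ring
  rw [intervalIntegral.integral_eq_sub_of_hasDerivAt key ?_]
  · ring
  · apply ContinuousOn.intervalIntegrable
    apply ContinuousOn.inv₀ (((continuous_sub_right x).pow 2).continuousOn)
    intro t ht
    rw [Set.uIcc_of_le hyη] at ht
    intro h
    have h2 : t - x = 0 := by
      have := pow_eq_zero_iff (M₀ := ℝ) (n := 2) (by norm_num) |>.mp h
      simpa using this
    linarith [ht.1]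

lemma calc2 {x η : ℝ} (hx : x < 0) (hη : 0 < η) :
    ∫ t in (0:ℝ)..η, t * ((t - x)^2)⁻¹
      = Real.log (η - x) - Real.log (-x) - 1 - x / (η - x) := by
  have key : ∀ t ∈ Set.uIcc (0:ℝ) η,
      HasDerivAt (fun u => Real.log (u - x) - x * (u - x)⁻¹) (t * ((t - x)^2)⁻¹) t := by
    intro t ht
    rw [Set.uIcc_of_le hη.le] at ht
    have htx : 0 < t - x := by linarith [ht.1]
    have h1 : HasDerivAt (fun u : ℝ => u - x) 1 t := (hasDerivAt_id t).sub_const x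
    have hlog : HasDerivAt (fun u => Real.log (u - x)) ((t - x)⁻¹ * 1) t :=
      by have := (Real.hasDerivAt_log htx.ne').comp t h1; exact this
    have hinv : HasDerivAt (fun u => x * (u - x)⁻¹) (x * (-1 / (t - x)^2)) t :=
      (h1.inv htx.ne').const_mul x
    have h2 := hlog.sub hinv
    refine h2.congr_deriv ?_
    field_simp
    ring
  rw [intervalIntegral.integral_eq_sub_of_hasDerivAt key ?_]
  · have h0 : (0:ℝ) - x = -x := by ring
    rw [h0]
    have hxne : x ≠ 0 := hx.ne
    have hne : η - x ≠ 0 := by intro h; linarith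
    rw [div_eq_mul_inv]
    have hxx : x * (-x)⁻¹ = -1 := by field_simp
    rw [hxx]; ring
  · apply ContinuousOn.intervalIntegrable
    apply ContinuousOn.mul continuous_id.continuousOn
    apply ContinuousOn.inv₀ (((continuous_sub_right x).pow 2).continuousOn)
    intro t ht
    rw [Set.uIcc_of_le hη.le] at ht
    intro h
    have h2 : t - x = 0 := by
      have := pow_eq_zero_iff (M₀ := ℝ) (n := 2) (by norm_num) |>.mp h
      simpa using this
    nlinarith [ht.1]

lemma calc3 {A x η : ℝ} (hx : x < 0) (hAx : -A ≤ x) (hη : 0 < η) :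
    ∫ s in (-A)..x, ((-s)⁻¹ - (η - s)⁻¹)
      = (Real.log (η - x) - Real.log (-x)) - (Real.log (η + A) - Real.log A) := by
  have key : ∀ s ∈ Set.uIcc (-A) x,
      HasDerivAt (fun u => Real.log (η - u) - Real.log (-u)) ((-s)⁻¹ - (η - s)⁻¹) s := by
    intro s hs
    rw [Set.uIcc_of_le hAx] at hs
    have hs0 : s < 0 := lt_of_le_of_lt hs.2 hx
    have h1 : HasDerivAt (fun u : ℝ => η - u) (-1) s := by
      simpa using (hasDerivAt_id s).const_sub η
    have h2 : HasDerivAt (fun u : ℝ => -u) (-1) s := (hasDerivAt_id s).neg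
    have hlog1 : HasDerivAt (fun u => Real.log (η - u)) ((η - s)⁻¹ * (-1)) s :=
      (Real.hasDerivAt_log (by linarith : η - s ≠ 0)).comp s h1
    have hlog2 : HasDerivAt (fun u => Real.log (-u)) ((-s)⁻¹ * (-1)) s :=
      (Real.hasDerivAt_log (by linarith : -s ≠ 0)).comp s h2
    have h3 := hlog1.sub hlog2
    refine h3.congr_deriv ?_
    ring
  rw [intervalIntegral.integral_eq_sub_of_hasDerivAt key ?_]
  · rw [show η - -A = η + A by ring, show -(-A) = A by ring]
  · apply ContinuousOn.intervalIntegrable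
    apply ContinuousOn.sub
    · apply ContinuousOn.inv₀ continuous_neg.continuousOn
      intro s hs
      rw [Set.uIcc_of_le hAx] at hs
      have : s < 0 := lt_of_le_of_lt hs.2 hx
      simpa using this.ne
    · apply ContinuousOn.inv₀ (continuous_const.sub continuous_id).continuousOn
      intro s hs
      rw [Set.uIcc_of_le hAx] at hs
      have : s < 0 := lt_of_le_of_lt hs.2 hx
      intro h; simp only [Pi.sub_apply, id_eq] at h; linarith

lemma calc4 {A η : ℝ} (hA : 0 < A) (hη : 0 < η) :
    ∫ s in (-A)..(0:ℝ), η * (η - s)⁻¹ = η * (Real.log (η + A) - Real.log η) := by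
  have hAx : (-A : ℝ) ≤ 0 := by linarith
  have key : ∀ s ∈ Set.uIcc (-A) (0:ℝ),
      HasDerivAt (fun u => -(η * Real.log (η - u))) (η * (η - s)⁻¹) s := by
    intro s hs
    rw [Set.uIcc_of_le hAx] at hs
    have hs0 : s ≤ 0 := hs.2
    have h1 : HasDerivAt (fun u : ℝ => η - u) (-1) s := by
      simpa using (hasDerivAt_id s).const_sub η
    have hlog1 : HasDerivAt (fun u => Real.log (η - u)) ((η - s)⁻¹ * (-1)) s :=
      (Real.hasDerivAt_log (by intro h; linarith : η - s ≠ 0)).comp s h1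
    have h3 := (hlog1.const_mul η).neg
    refine h3.congr_deriv ?_
    ring
  rw [intervalIntegral.integral_eq_sub_of_hasDerivAt key ?_]
  · rw [show η - -A = η + A by ring, show η - (0:ℝ) = η by ring]
    ring
  · apply ContinuousOn.intervalIntegrable
    apply ContinuousOn.mul continuous_const.continuousOn
    apply ContinuousOn.inv₀ (continuous_const.sub continuous_id).continuousOn
    intro s hs
    rw [Set.uIcc_of_le hAx] at hs
    intro h; simp only [Pi.sub_apply, id_eq] at h; linarith [hs.2]

lemma swap_tri {a b : ℝ} (p q : ℝ → ENNReal) (hp : Measurable p) (hq : Measurable q) :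
    ∫⁻ y in Set.Ioo a b, p y * ∫⁻ t in Set.Ioo y b, q t
      = ∫⁻ t in Set.Ioo a b, q t * ∫⁻ y in Set.Ioo a t, p y := by
  have hqm : Measurable fun t => q t := hq
  have hFm : Measurable (Function.uncurry fun y t =>
      if y < t then p y * q t else 0) := by
    apply Measurable.ite (measurableSet_lt measurable_fst measurable_snd)
    · exact (hp.comp measurable_fst).mul (hq.comp measurable_snd)
    · exact measurable_const
  have lhs_eq : ∀ y ∈ Set.Ioo a b,
      p y * ∫⁻ t in Set.Ioo y b, q t
        = ∫⁻ t in Set.Ioo a b, (if y < t then p y * q t else 0) := by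
    intro y hy
    have hset : Set.Ioi y ∩ Set.Ioo a b = Set.Ioo y b := by
      ext t
      simp only [Set.mem_inter_iff, Set.mem_Ioi, Set.mem_Ioo]
      constructor
      · rintro ⟨h1, _, h3⟩; exact ⟨h1, h3⟩
      · rintro ⟨h1, h2⟩; exact ⟨h1, lt_trans hy.1 h1, h2⟩
    have : (fun t => if y < t then p y * q t else 0)
        = (Set.Ioi y).indicator (fun t => p y * q t) := by
      funext t; simp [Set.indicator_apply, Set.mem_Ioi]
    rw [this, lintegral_indicator measurableSet_Ioi,
      Measure.restrict_restrict measurableSet_Ioi, hset,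
      lintegral_const_mul _ hq]
  have rhs_eq : ∀ t ∈ Set.Ioo a b,
      q t * ∫⁻ y in Set.Ioo a t, p y
        = ∫⁻ y in Set.Ioo a b, (if y < t then p y * q t else 0) := by
    intro t ht
    have hset : Set.Iio t ∩ Set.Ioo a b = Set.Ioo a t := by
      ext y
      simp only [Set.mem_inter_iff, Set.mem_Iio, Set.mem_Ioo]
      constructor
      · rintro ⟨h1, h2, _⟩; exact ⟨h2, h1⟩
      · rintro ⟨h1, h2⟩; exact ⟨h2, h1, lt_trans h2 ht.2⟩
    have : (fun y => if y < t then p y * q t else 0)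
        = (Set.Iio t).indicator (fun y => p y * q t) := by
      funext y; simp [Set.indicator_apply, Set.mem_Iio]
    rw [this, lintegral_indicator measurableSet_Iio,
      Measure.restrict_restrict measurableSet_Iio, hset,
      lintegral_mul_const _ hp, mul_comm]
  calc ∫⁻ y in Set.Ioo a b, p y * ∫⁻ t in Set.Ioo y b, q t
      = ∫⁻ y in Set.Ioo a b, ∫⁻ t in Set.Ioo a b, (if y < t then p y * q t else 0) :=
        setLIntegral_congr_fun measurableSet_Ioo lhs_eq
    _ = ∫⁻ t in Set.Ioo a b, ∫⁻ y in Set.Ioo a b, (if y < t then p y * q t else 0) :=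
        lintegral_lintegral_swap hFm.aemeasurable
    _ = ∫⁻ t in Set.Ioo a b, q t * ∫⁻ y in Set.Ioo a t, p y :=
        (setLIntegral_congr_fun measurableSet_Ioo rhs_eq).symm

lemma inner_bound {η x C₂ : ℝ} (hη0 : 0 < η) (hx : x < 0)
    {k : ℝ → ℝ} (hkm : Measurable k) (hk0 : ∀ y, 0 ≤ k y) (hkloc : LocallyIntegrable k)
    (hC : ∀ t ∈ Set.Ioc (0:ℝ) η, ∫ ζ in (0:ℝ)..t, k ζ ≤ C₂ * t) :
    ∫⁻ y in Set.Ioo 0 η, ENNReal.ofReal (k y) * ENNReal.ofReal ((y - x)⁻¹)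
      ≤ ENNReal.ofReal (C₂ * Real.log ((η - x) / (-x))) := by
  have hC₂0 : 0 ≤ C₂ := by
    have h1 : (0:ℝ) ≤ ∫ ζ in (0:ℝ)..η, k ζ :=
      intervalIntegral.integral_nonneg hη0.le (fun u _ => hk0 u)
    have h2 := hC η ⟨hη0, le_refl η⟩
    nlinarith
  have hq : ∀ t : ℝ, (0:ℝ) ≤ ((t - x)^2)⁻¹ := fun t => by positivity
  -- step 1 : pointwise resolvent identity
  have step1 : ∀ y ∈ Set.Ioo (0:ℝ) η,
      ENNReal.ofReal ((y - x)⁻¹)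
        = ENNReal.ofReal ((η - x)⁻¹) + ∫⁻ t in Set.Ioo y η, ENNReal.ofReal (((t - x)^2)⁻¹) := by
    intro y hy
    have hyx : 0 < y - x := by linarith [hy.1]
    have hηx : 0 < η - x := by linarith [hy.2]
    have h1 : ∫⁻ t in Set.Ioo y η, ENNReal.ofReal (((t - x)^2)⁻¹)
        = ENNReal.ofReal (∫ t in y..η, ((t - x)^2)⁻¹) := by
      apply lint_ofReal_cont hy.2.le
      · apply ContinuousOn.inv₀ (((continuous_sub_right x).pow 2).continuousOn)
        intro t ht
        have : 0 < t - x := by linarith [ht.1, hy.1]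
        exact pow_ne_zero 2 this.ne'
      · intro t _; exact hq t
    have hsub : (η - x)⁻¹ ≤ (y - x)⁻¹ := by
      rw [inv_le_inv₀ hηx hyx]; linarith [hy.2]
    rw [h1, calc1 (by linarith [hy.1]) hy.2.le,
      ← ENNReal.ofReal_add (by positivity) (by linarith)]
    congr 1
    ring
  -- main computation
  have hpm : Measurable fun y => ENNReal.ofReal (k y) :=
    ENNReal.measurable_ofReal.comp hkm
  have hqm : Measurable fun t => ENNReal.ofReal (((t - x)^2)⁻¹) := by
    apply ENNReal.measurable_ofReal.comp
    exact (((measurable_id.sub measurable_const).pow_const 2).inv)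
  calc ∫⁻ y in Set.Ioo 0 η, ENNReal.ofReal (k y) * ENNReal.ofReal ((y - x)⁻¹)
      = ∫⁻ y in Set.Ioo 0 η, (ENNReal.ofReal (k y) * ENNReal.ofReal ((η - x)⁻¹)
          + ENNReal.ofReal (k y) * ∫⁻ t in Set.Ioo y η, ENNReal.ofReal (((t - x)^2)⁻¹)) := by
        refine setLIntegral_congr_fun measurableSet_Ioo (fun y hy => ?_)
        rw [step1 y hy, mul_add]
    _ = (∫⁻ y in Set.Ioo 0 η, ENNReal.ofReal (k y) * ENNReal.ofReal ((η - x)⁻¹))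
          + ∫⁻ y in Set.Ioo 0 η, ENNReal.ofReal (k y)
              * ∫⁻ t in Set.Ioo y η, ENNReal.ofReal (((t - x)^2)⁻¹) :=
        lintegral_add_left (hpm.mul measurable_const) _
    _ ≤ ENNReal.ofReal (C₂ * (η * (η - x)⁻¹))
          + ENNReal.ofReal (C₂ * ∫ t in (0:ℝ)..η, t * ((t - x)^2)⁻¹) := by
        apply add_le_add
        · -- term 1
          rw [lintegral_mul_const _ hpm, klint hkloc hk0 hη0.le]
          have h1 : ∫ ζ in (0:ℝ)..η, k ζ ≤ C₂ * η := hC η ⟨hη0, le_refl η⟩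
          calc ENNReal.ofReal (∫ ζ in (0:ℝ)..η, k ζ) * ENNReal.ofReal ((η - x)⁻¹)
              ≤ ENNReal.ofReal (C₂ * η) * ENNReal.ofReal ((η - x)⁻¹) := by
                exact mul_le_mul_left (ENNReal.ofReal_le_ofReal h1) _
            _ = ENNReal.ofReal (C₂ * (η * (η - x)⁻¹)) := by
                rw [← ENNReal.ofReal_mul (by positivity)]
                congr 1; ring
        · -- term 2 : Tonelli swap
          rw [swap_tri _ _ hpm hqm]
          have hb : ∫⁻ t in Set.Ioo 0 η,
              ENNReal.ofReal (((t - x)^2)⁻¹) * ∫⁻ y in Set.Ioo 0 t, ENNReal.ofReal (k y)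
                ≤ ∫⁻ t in Set.Ioo 0 η, ENNReal.ofReal (C₂ * (t * ((t - x)^2)⁻¹)) := by
            apply setLIntegral_mono (ENNReal.measurable_ofReal.comp (by fun_prop))
            intro t ht
            rw [klint hkloc hk0 ht.1.le]
            calc ENNReal.ofReal (((t - x)^2)⁻¹) * ENNReal.ofReal (∫ ζ in (0:ℝ)..t, k ζ)
                ≤ ENNReal.ofReal (((t - x)^2)⁻¹) * ENNReal.ofReal (C₂ * t) :=
                  mul_le_mul_right (ENNReal.ofReal_le_ofReal (hC t ⟨ht.1, ht.2.le⟩)) _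
              _ = ENNReal.ofReal (C₂ * (t * ((t - x)^2)⁻¹)) := by
                  rw [← ENNReal.ofReal_mul (hq t)]
                  congr 1; ring
          refine hb.trans_eq ?_
          rw [lint_ofReal_cont hη0.le ?_ ?_]
          · rw [← intervalIntegral.integral_const_mul]
          · apply ContinuousOn.mul continuous_const.continuousOn
            apply ContinuousOn.mul continuous_id.continuousOn
            apply ContinuousOn.inv₀ (((continuous_sub_right x).pow 2).continuousOn)
            intro t ht
            have : 0 < t - x := by linarith [ht.1]
            exact pow_ne_zero 2 this.ne'
          · intro t ht
            have := hq t
            have ht0 := ht.1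
            positivity
    _ = ENNReal.ofReal (C₂ * Real.log ((η - x) / (-x))) := by
        have hηx : 0 < η - x := by linarith
        have hnx : 0 < -x := by linarith
        rw [calc2 hx hη0, ← ENNReal.ofReal_add]
        · congr 1
          rw [Real.log_div hηx.ne' hnx.ne']
          have hne : η - x ≠ 0 := hηx.ne'
          field_simp
          ring
        · positivity
        · have h1 : (0:ℝ) ≤ ∫ t in (0:ℝ)..η, t * ((t - x)^2)⁻¹ :=
            intervalIntegral.integral_nonneg hη0.le (fun u hu => by
              have := hq u; have := hu.1; positivity)
          rw [calc2 hx hη0] at h1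
          nlinarith

lemma ktotal {A C₁ : ℝ} (hA : 0 < A)
    {k : ℝ → ℝ} (hk0 : ∀ y, 0 ≤ k y) (hkloc : LocallyIntegrable k)
    (hC : ∀ s ∈ Set.Ioo (-A) (0:ℝ), ∫ ζ in s..0, k ζ ≤ C₁ * (-s))
    (hC₁0 : 0 ≤ C₁) :
    ∫⁻ s in Set.Ioo (-A) 0, ENNReal.ofReal (k s) ≤ ENNReal.ofReal (C₁ * A) := by
  set S : ℕ → Set ℝ := fun n => Set.Ioo (-A + A / (n + 2)) 0 with hS
  have hpos : ∀ n : ℕ, 0 < A / ((n : ℝ) + 2) := fun n => by positivity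
  have hlt : ∀ n : ℕ, A / ((n : ℝ) + 2) < A := fun n =>
    div_lt_self hA (by have : (0:ℝ) ≤ (n:ℝ) := Nat.cast_nonneg n; linarith)
  have hmono : Monotone S := by
    intro n m hnm
    apply Set.Ioo_subset_Ioo _ le_rfl
    have : A / ((m : ℝ) + 2) ≤ A / ((n : ℝ) + 2) := by
      apply div_le_div_of_nonneg_left hA.le (by positivity)
      exact_mod_cast by omega
    linarith
  have hunion : (⋃ n, S n) = Set.Ioo (-A) 0 := by
    ext s
    simp only [Set.mem_iUnion, hS, Set.mem_Ioo]
    constructor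
    · rintro ⟨n, h1, h2⟩
      exact ⟨by linarith [hpos n], h2⟩
    · rintro ⟨h1, h2⟩
      obtain ⟨n, hn⟩ := exists_nat_gt (A / (s + A))
      refine ⟨n, ?_, h2⟩
      have hsA : 0 < s + A := by linarith
      have h3 : A / (s + A) < (n : ℝ) + 2 := by linarith [hn]
      have h4 : A / ((n : ℝ) + 2) < s + A := by
        rw [div_lt_iff₀ (by positivity)]
        rw [div_lt_iff₀ hsA] at h3
        linarith [mul_comm (s + A) ((n : ℝ) + 2)]
      linarith
  have hint : IntegrableOn k (⋃ n, S n) := by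
    rw [hunion]
    exact (hkloc.integrableOn_isCompact (isCompact_Icc (a := -A) (b := 0))).mono_set
      Set.Ioo_subset_Icc_self
  have htend := MeasureTheory.tendsto_setIntegral_of_monotone
    (fun n => measurableSet_Ioo) hmono hint
  have hbound : ∫ s in ⋃ n, S n, k s ≤ C₁ * A := by
    apply le_of_tendsto htend
    filter_upwards with n
    have hx0 : -A + A / ((n : ℝ) + 2) < 0 := by linarith [hlt n]
    have hmem : -A + A / ((n : ℝ) + 2) ∈ Set.Ioo (-A) (0:ℝ) := ⟨by linarith [hpos n], hx0⟩
    have h1 : ∫ s in S n, k s = ∫ ζ in (-A + A / ((n : ℝ) + 2))..0, k ζ := ii_Ioo hx0.le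
    rw [h1]
    calc ∫ ζ in (-A + A / ((n : ℝ) + 2))..0, k ζ ≤ C₁ * (-(-A + A / ((n : ℝ) + 2))) :=
          hC _ hmem
      _ ≤ C₁ * A := by nlinarith [hpos n]
  calc ∫⁻ s in Set.Ioo (-A) 0, ENNReal.ofReal (k s)
      = ENNReal.ofReal (∫ ζ in (-A)..0, k ζ) := klint hkloc hk0 (by linarith)
    _ ≤ ENNReal.ofReal (C₁ * A) := by
        apply ENNReal.ofReal_le_ofReal
        rw [← ii_Ioo (by linarith : (-A:ℝ) ≤ 0), ← hunion]
        exact hbound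

lemma log_one_add_div {a b : ℝ} (ha : 0 < a) (hb : 0 < b) :
    Real.log (1 + a / b) = Real.log (a + b) - Real.log b := by
  rw [show 1 + a / b = (a + b) / b by field_simp; ring, Real.log_div (by positivity) hb.ne']

lemma outer_bound {A η C₁ : ℝ} (hA : 0 < A) (hη : 0 < η)
    {k : ℝ → ℝ} (hkm : Measurable k) (hk0 : ∀ y, 0 ≤ k y) (hkloc : LocallyIntegrable k)
    (hC : ∀ s ∈ Set.Ioo (-A) (0:ℝ), ∫ ζ in s..0, k ζ ≤ C₁ * (-s)) :
    ∫⁻ s in Set.Ioo (-A) 0, ENNReal.ofReal (k s) * ENNReal.ofReal (Real.log ((η - s) / (-s)))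
      ≤ ENNReal.ofReal (C₁ * (A * Real.log (1 + η / A) + η * Real.log (1 + A / η))) := by
  have hC₁0 : 0 ≤ C₁ := by
    have hmem : -A / 2 ∈ Set.Ioo (-A) (0:ℝ) := by constructor <;> [linarith; linarith]
    have h1 : (0:ℝ) ≤ ∫ ζ in (-A/2)..0, k ζ :=
      intervalIntegral.integral_nonneg (by linarith) (fun u _ => hk0 u)
    have h2 := hC _ hmem
    nlinarith
  have hlog1 : Real.log (1 + η / A) = Real.log (η + A) - Real.log A := by
    rw [log_one_add_div hη hA]
  have hlog2 : Real.log (1 + A / η) = Real.log (η + A) - Real.log η := by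
    rw [log_one_add_div hA hη, add_comm A η]
  have hgA0 : 0 ≤ Real.log (η + A) - Real.log A :=
    sub_nonneg.mpr (Real.log_le_log hA (by linarith))
  have hqnn : ∀ u : ℝ, u < 0 → (0:ℝ) ≤ (-u)⁻¹ - (η - u)⁻¹ := by
    intro u hu
    have h1 : (0:ℝ) < -u := by linarith
    have h2 : -u ≤ η - u := by linarith
    have := inv_le_inv₀ (by linarith : (0:ℝ) < η - u) h1 |>.mpr h2
    linarith
  -- pointwise decomposition
  have step1 : ∀ s ∈ Set.Ioo (-A) (0:ℝ),
      ENNReal.ofReal (Real.log ((η - s) / (-s)))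
        = ENNReal.ofReal (Real.log (1 + η / A))
          + ∫⁻ u in Set.Ioo (-A) s, ENNReal.ofReal ((-u)⁻¹ - (η - u)⁻¹) := by
    intro s hs
    have hs0 : s < 0 := hs.2
    have hsA : -A ≤ s := hs.1.le
    have h1 : ∫⁻ u in Set.Ioo (-A) s, ENNReal.ofReal ((-u)⁻¹ - (η - u)⁻¹)
        = ENNReal.ofReal (∫ u in (-A)..s, ((-u)⁻¹ - (η - u)⁻¹)) := by
      apply lint_ofReal_cont hsA
      · apply ContinuousOn.sub
        · apply ContinuousOn.inv₀ continuous_neg.continuousOn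
          intro u hu
          have : u < 0 := lt_of_le_of_lt hu.2 hs0
          simpa using this.ne
        · apply ContinuousOn.inv₀ (continuous_const.sub continuous_id).continuousOn
          intro u hu
          have : u < 0 := lt_of_le_of_lt hu.2 hs0
          intro h; simp only [Pi.sub_apply, id_eq] at h; linarith
      · intro u hu
        exact hqnn u (lt_of_le_of_lt hu.2 hs0)
    have h2 : (0:ℝ) ≤ ∫ u in (-A)..s, ((-u)⁻¹ - (η - u)⁻¹) :=
      intervalIntegral.integral_nonneg hsA (fun u hu => hqnn u (lt_of_le_of_lt hu.2 hs0))
    rw [h1, calc3 hs0 hsA hη, hlog1,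
      Real.log_div (by linarith : η - s ≠ 0) (by linarith : -s ≠ 0),
      ← ENNReal.ofReal_add hgA0]
    · congr 1; ring
    · rw [calc3 hs0 hsA hη] at h2; linarith
  have hpm : Measurable fun s => ENNReal.ofReal (k s) :=
    ENNReal.measurable_ofReal.comp hkm
  have hqm : Measurable fun u => ENNReal.ofReal ((-u)⁻¹ - (η - u)⁻¹) := by
    apply ENNReal.measurable_ofReal.comp
    fun_prop
  calc ∫⁻ s in Set.Ioo (-A) 0, ENNReal.ofReal (k s) * ENNReal.ofReal (Real.log ((η - s) / (-s)))
      = ∫⁻ s in Set.Ioo (-A) 0, (ENNReal.ofReal (k s) * ENNReal.ofReal (Real.log (1 + η / A))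
          + ENNReal.ofReal (k s) * ∫⁻ u in Set.Ioo (-A) s, ENNReal.ofReal ((-u)⁻¹ - (η - u)⁻¹)) := by
        refine setLIntegral_congr_fun measurableSet_Ioo (fun s hs => ?_)
        rw [step1 s hs, mul_add]
    _ = (∫⁻ s in Set.Ioo (-A) 0, ENNReal.ofReal (k s) * ENNReal.ofReal (Real.log (1 + η / A)))
          + ∫⁻ s in Set.Ioo (-A) 0, ENNReal.ofReal (k s)
              * ∫⁻ u in Set.Ioo (-A) s, ENNReal.ofReal ((-u)⁻¹ - (η - u)⁻¹) :=
        lintegral_add_left (hpm.mul measurable_const) _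
    _ ≤ ENNReal.ofReal (C₁ * (A * Real.log (1 + η / A)))
          + ENNReal.ofReal (C₁ * (η * Real.log (1 + A / η))) := by
        apply add_le_add
        · -- term 1
          rw [lintegral_mul_const _ hpm]
          calc (∫⁻ s in Set.Ioo (-A) 0, ENNReal.ofReal (k s)) * ENNReal.ofReal (Real.log (1 + η / A))
              ≤ ENNReal.ofReal (C₁ * A) * ENNReal.ofReal (Real.log (1 + η / A)) :=
                mul_le_mul_left (ktotal hA hk0 hkloc hC hC₁0) _
            _ = ENNReal.ofReal (C₁ * (A * Real.log (1 + η / A))) := by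
                rw [← ENNReal.ofReal_mul (by positivity)]
                congr 1; ring
        · -- term 2 : swap
          rw [show ∫⁻ s in Set.Ioo (-A) 0, ENNReal.ofReal (k s)
              * ∫⁻ u in Set.Ioo (-A) s, ENNReal.ofReal ((-u)⁻¹ - (η - u)⁻¹)
            = ∫⁻ u in Set.Ioo (-A) 0, ENNReal.ofReal ((-u)⁻¹ - (η - u)⁻¹)
              * ∫⁻ s in Set.Ioo u 0, ENNReal.ofReal (k s)
            from (swap_tri _ _ hqm hpm).symm]
          have hb : ∫⁻ u in Set.Ioo (-A) 0,
              ENNReal.ofReal ((-u)⁻¹ - (η - u)⁻¹) * ∫⁻ s in Set.Ioo u 0, ENNReal.ofReal (k s)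
                ≤ ∫⁻ u in Set.Ioo (-A) 0, ENNReal.ofReal (C₁ * (η * (η - u)⁻¹)) := by
            apply setLIntegral_mono (ENNReal.measurable_ofReal.comp (by fun_prop))
            intro u hu
            rw [klint hkloc hk0 hu.2.le]
            calc ENNReal.ofReal ((-u)⁻¹ - (η - u)⁻¹) * ENNReal.ofReal (∫ ζ in u..0, k ζ)
                ≤ ENNReal.ofReal ((-u)⁻¹ - (η - u)⁻¹) * ENNReal.ofReal (C₁ * (-u)) :=
                  mul_le_mul_right (ENNReal.ofReal_le_ofReal (hC u hu)) _
              _ = ENNReal.ofReal (C₁ * (η * (η - u)⁻¹)) := by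
                  rw [← ENNReal.ofReal_mul (hqnn u hu.2)]
                  congr 1
                  have hu0 : u ≠ 0 := hu.2.ne
                  have hηu : η - u ≠ 0 := by intro h; nlinarith [hu.2]
                  field_simp [hu0, hηu]
                  ring
          refine hb.trans_eq ?_
          rw [lint_ofReal_cont (by linarith : (-A:ℝ) ≤ 0) ?_ ?_]
          · rw [show (fun u => C₁ * (η * (η - u)⁻¹)) = fun u => C₁ * (η * (η - u)⁻¹) from rfl]
            rw [intervalIntegral.integral_const_mul, calc4 hA hη, hlog2]
          · apply ContinuousOn.mul continuous_const.continuousOn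
            apply ContinuousOn.mul continuous_const.continuousOn
            apply ContinuousOn.inv₀ (continuous_const.sub continuous_id).continuousOn
            intro u hu
            intro h; simp only [Pi.sub_apply, id_eq] at h; linarith [hu.2]
          · intro u hu
            have : (0:ℝ) < η - u := by nlinarith [hu.2]
            positivity
    _ = ENNReal.ofReal (C₁ * (A * Real.log (1 + η / A) + η * Real.log (1 + A / η))) := by
        rw [← ENNReal.ofReal_add]
        · congr 1; ring
        · have h1 : (0:ℝ) ≤ η / A := by positivity
          have := Real.log_nonneg (by linarith : (1:ℝ) ≤ 1 + η / A)
          positivity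
        · have h1 : (0:ℝ) ≤ A / η := by positivity
          have := Real.log_nonneg (by linarith : (1:ℝ) ≤ 1 + A / η)
          positivity

/-- Double-integral bound: if `κ₁, κ₂ ≥ 0` are locally integrable, with
`∫_x^0 κ₁ ≤ C₁·(-x)` near `0⁻` and `∫_0^y κ₂ ≤ C₂·y` near `0⁺` (finiteness of the
Lebesgue-point suprema), then for all `η ∈ (0,1)`
`∫_{-A}^0 ∫_0^η κ₁(x)κ₂(y)/(y-x) dy dx ≤ C₁C₂ [A ln(1+η/A) + η ln(1+A/η)]`. -/
theorem stmt5 (A : ℝ) (hA : 0 < A) (κ₁ κ₂ : ℝ → ℝ)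
    (hκ₁loc : LocallyIntegrable κ₁) (hκ₂loc : LocallyIntegrable κ₂)
    (hκ₁pos : ∀ x, 0 ≤ κ₁ x) (hκ₂pos : ∀ y, 0 ≤ κ₂ y)
    (C₁ C₂ : ℝ)
    (hC₁ : ∀ x ∈ Set.Ioo (-A) (0 : ℝ), ∫ ζ in x..0, κ₁ ζ ≤ C₁ * (-x))
    (hC₂ : ∀ y ∈ Set.Ioo (0 : ℝ) 1, ∫ ζ in (0 : ℝ)..y, κ₂ ζ ≤ C₂ * y)
    (η : ℝ) (hη : η ∈ Set.Ioo (0 : ℝ) 1) :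
    (∫ x in (-A)..0, ∫ y in (0 : ℝ)..η, κ₁ x * κ₂ y / (y - x)) ≤
      C₁ * C₂ * (A * Real.log (1 + η / A) + η * Real.log (1 + A / η)) := by
  obtain ⟨hη0, hη1⟩ := hη
  -- measurable representatives
  have ha₁ := hκ₁loc.aestronglyMeasurable
  have ha₂ := hκ₂loc.aestronglyMeasurable
  set k₁ : ℝ → ℝ := fun x => max (ha₁.mk κ₁ x) 0 with hk₁def
  set k₂ : ℝ → ℝ := fun y => max (ha₂.mk κ₂ y) 0 with hk₂def
  have hk₁m : Measurable k₁ := (ha₁.stronglyMeasurable_mk.measurable).max measurable_const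
  have hk₂m : Measurable k₂ := (ha₂.stronglyMeasurable_mk.measurable).max measurable_const
  have hk₁ae : κ₁ =ᵐ[volume] k₁ := by
    filter_upwards [ha₁.ae_eq_mk] with x hx
    rw [hk₁def]
    simp only [← hx, max_eq_left (hκ₁pos x)]
  have hk₂ae : κ₂ =ᵐ[volume] k₂ := by
    filter_upwards [ha₂.ae_eq_mk] with y hy
    rw [hk₂def]
    simp only [← hy, max_eq_left (hκ₂pos y)]
  have hk₁0 : ∀ x, 0 ≤ k₁ x := fun x => le_max_right _ _
  have hk₂0 : ∀ y, 0 ≤ k₂ y := fun y => le_max_right _ _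
  have hk₁loc : LocallyIntegrable k₁ := by
    intro x
    obtain ⟨s, hs, hint⟩ := hκ₁loc x
    exact ⟨s, hs, hint.congr (ae_restrict_of_ae hk₁ae)⟩
  have hk₂loc : LocallyIntegrable k₂ := by
    intro y
    obtain ⟨s, hs, hint⟩ := hκ₂loc y
    exact ⟨s, hs, hint.congr (ae_restrict_of_ae hk₂ae)⟩
  -- transferred hypotheses
  have hC₁' : ∀ s ∈ Set.Ioo (-A) (0:ℝ), ∫ ζ in s..0, k₁ ζ ≤ C₁ * (-s) := by
    intro s hs
    have h := hC₁ s hs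
    rwa [intervalIntegral.integral_congr_ae (hk₁ae.mono fun x hx => fun _ => hx)] at h
  have hC₂' : ∀ t ∈ Set.Ioc (0:ℝ) η, ∫ ζ in (0:ℝ)..t, k₂ ζ ≤ C₂ * t := by
    intro t ht
    have h := hC₂ t ⟨ht.1, lt_of_le_of_lt ht.2 hη1⟩
    rwa [intervalIntegral.integral_congr_ae (hk₂ae.mono fun y hy => fun _ => hy)] at h
  have hC₁0 : 0 ≤ C₁ := by
    have hmem : -A/2 ∈ Set.Ioo (-A) (0:ℝ) := ⟨by linarith, by linarith⟩
    have h1 : (0:ℝ) ≤ ∫ ζ in (-A/2)..0, κ₁ ζ :=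
      intervalIntegral.integral_nonneg (by linarith) fun u _ => hκ₁pos u
    nlinarith [hC₁ _ hmem]
  have hC₂0 : 0 ≤ C₂ := by
    have hmem : η/2 ∈ Set.Ioo (0:ℝ) 1 := ⟨by linarith, by linarith⟩
    have h1 : (0:ℝ) ≤ ∫ ζ in (0:ℝ)..(η/2), κ₂ ζ :=
      intervalIntegral.integral_nonneg (by linarith) fun u _ => hκ₂pos u
    nlinarith [hC₂ _ hmem]
  -- the inner integral as a function of x
  set J : ℝ → ℝ := fun x => ∫ y in Set.Ioc 0 η, k₂ y / (y - x) with hJdef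
  have hJm : StronglyMeasurable J := by
    have h : Measurable fun p : ℝ × ℝ => k₂ p.2 / (p.2 - p.1) :=
      (hk₂m.comp measurable_snd).div (measurable_snd.sub measurable_fst)
    exact h.stronglyMeasurable.integral_prod_right'
  have hJnonneg : ∀ x ≤ (0:ℝ), 0 ≤ J x := by
    intro x hx
    apply setIntegral_nonneg measurableSet_Ioc
    intro y hy
    exact div_nonneg (hk₂0 y) (by linarith [hy.1])
  -- rewrite LHS
  have hLHS : (∫ x in (-A)..0, ∫ y in (0:ℝ)..η, κ₁ x * κ₂ y / (y - x))
      = ∫ x in Set.Ioc (-A) 0, k₁ x * J x := by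
    rw [intervalIntegral.integral_of_le (by linarith : (-A:ℝ) ≤ 0)]
    apply setIntegral_congr_ae measurableSet_Ioc
    filter_upwards [hk₁ae] with x hx1 _
    calc (∫ y in (0:ℝ)..η, κ₁ x * κ₂ y / (y - x))
        = ∫ y in (0:ℝ)..η, κ₁ x * (k₂ y / (y - x)) := by
          apply intervalIntegral.integral_congr_ae
          filter_upwards [hk₂ae] with y hy _
          rw [mul_div_assoc, hy]
      _ = κ₁ x * ∫ y in (0:ℝ)..η, k₂ y / (y - x) := intervalIntegral.integral_const_mul _ _
      _ = k₁ x * J x := by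
          rw [hx1]
          congr 1
          rw [intervalIntegral.integral_of_le hη0.le]
  have key : ∫ x in Set.Ioc (-A) 0, k₁ x * J x
      = (∫⁻ x in Set.Ioc (-A) 0, ENNReal.ofReal (k₁ x * J x)).toReal := by
    apply integral_eq_lintegral_of_nonneg_ae
    · refine (ae_restrict_iff' measurableSet_Ioc).2 (ae_of_all _ fun x hx => ?_)
      exact mul_nonneg (hk₁0 x) (hJnonneg x hx.2)
    · exact (hk₁m.mul hJm.measurable).aestronglyMeasurable
  -- compare with the ENNReal-valued inner integral
  set G : ℝ → ENNReal := fun x =>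
    ∫⁻ y in Set.Ioo 0 η, ENNReal.ofReal (k₂ y) * ENNReal.ofReal ((y - x)⁻¹) with hGdef
  have hJG : ∀ x < (0:ℝ), ENNReal.ofReal (J x) ≤ G x := by
    intro x hx
    have h1 : J x = (∫⁻ y in Set.Ioc 0 η, ENNReal.ofReal (k₂ y / (y - x))).toReal := by
      apply integral_eq_lintegral_of_nonneg_ae
      · refine (ae_restrict_iff' measurableSet_Ioc).2 (ae_of_all _ fun y hy => ?_)
        exact div_nonneg (hk₂0 y) (by linarith [hy.1])
      · exact (hk₂m.div ((measurable_id.sub measurable_const))).aestronglyMeasurable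
    have h2 : (∫⁻ y in Set.Ioc 0 η, ENNReal.ofReal (k₂ y / (y - x)))
        = ∫⁻ y in Set.Ioo 0 η, ENNReal.ofReal (k₂ y / (y - x)) :=
      (setLIntegral_congr MeasureTheory.Ioo_ae_eq_Ioc).symm
    have h3 : (∫⁻ y in Set.Ioo 0 η, ENNReal.ofReal (k₂ y / (y - x))) = G x := by
      refine setLIntegral_congr_fun measurableSet_Ioo (fun y hy => ?_)
      rw [div_eq_mul_inv, ENNReal.ofReal_mul (hk₂0 y)]
    rw [h1, h2, h3]
    exact ENNReal.ofReal_toReal_le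
  set Sv : ℝ := A * Real.log (1 + η / A) + η * Real.log (1 + A / η) with hSdef
  have hS0 : 0 ≤ Sv := by
    rw [hSdef]
    have h1 : (0:ℝ) ≤ η / A := by positivity
    have h2 : (0:ℝ) ≤ A / η := by positivity
    have l1 := Real.log_nonneg (by linarith : (1:ℝ) ≤ 1 + η / A)
    have l2 := Real.log_nonneg (by linarith : (1:ℝ) ≤ 1 + A / η)
    positivity
  have main : (∫⁻ x in Set.Ioc (-A) 0, ENNReal.ofReal (k₁ x * J x))
      ≤ ENNReal.ofReal (C₁ * C₂ * Sv) := by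
    calc ∫⁻ x in Set.Ioc (-A) 0, ENNReal.ofReal (k₁ x * J x)
        = ∫⁻ x in Set.Ioo (-A) 0, ENNReal.ofReal (k₁ x * J x) :=
          (setLIntegral_congr MeasureTheory.Ioo_ae_eq_Ioc).symm
      _ ≤ ∫⁻ x in Set.Ioo (-A) 0, ENNReal.ofReal (k₁ x)
            * (ENNReal.ofReal C₂ * ENNReal.ofReal (Real.log ((η - x) / (-x)))) := by
          apply setLIntegral_mono ?_ ?_
          · apply Measurable.mul (ENNReal.measurable_ofReal.comp hk₁m)
            apply Measurable.const_mul
            apply ENNReal.measurable_ofReal.comp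
            apply Real.measurable_log.comp
            fun_prop
          · intro x hx
            rw [ENNReal.ofReal_mul (hk₁0 x)]
            apply mul_le_mul_right
            calc ENNReal.ofReal (J x)
                ≤ G x := hJG x hx.2
              _ ≤ ENNReal.ofReal (C₂ * Real.log ((η - x) / (-x))) :=
                  inner_bound hη0 hx.2 hk₂m hk₂0 hk₂loc hC₂'
              _ = ENNReal.ofReal C₂ * ENNReal.ofReal (Real.log ((η - x) / (-x))) :=
                  ENNReal.ofReal_mul hC₂0
      _ = ENNReal.ofReal C₂ * ∫⁻ x in Set.Ioo (-A) 0,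
            ENNReal.ofReal (k₁ x) * ENNReal.ofReal (Real.log ((η - x) / (-x))) := by
          rw [← lintegral_const_mul' _ _ ENNReal.ofReal_ne_top]
          refine setLIntegral_congr_fun measurableSet_Ioo (fun x hx => ?_)
          ring
      _ ≤ ENNReal.ofReal C₂ * ENNReal.ofReal (C₁ * Sv) :=
          mul_le_mul_right (outer_bound hA hη0 hk₁m hk₁0 hk₁loc hC₁') _
      _ = ENNReal.ofReal (C₁ * C₂ * Sv) := by
          rw [← ENNReal.ofReal_mul hC₂0]
          congr 1
          ring
  rw [hLHS, key]
  calc (∫⁻ x in Set.Ioc (-A) 0, ENNReal.ofReal (k₁ x * J x)).toReal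
      ≤ (ENNReal.ofReal (C₁ * C₂ * Sv)).toReal :=
        ENNReal.toReal_mono ENNReal.ofReal_ne_top main
    _ = C₁ * C₂ * Sv := ENNReal.toReal_ofReal (by positivity)
end

section
/- Let κ₂ ∈ L¹_loc(ℝ) be non-negative with C₂ := sup_{y∈(0,1)} y^{−1}∫_0^y κ₂(ζ)dζ < ∞. Then for every x < 0 and every η ∈ (0,1): ∫_0^η κ₂(y)/(y − x) dy ≤ C₂ ln(1 − η/x). -/
open MeasureTheory intervalIntegral

/-- If `κ₂ ≥ 0` is locally integrable with `∫_0^y κ₂ ≤ C₂·y` for `y ∈ (0,1)`,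
then for every `x < 0` and `η ∈ (0,1)`:
`∫_0^η κ₂(y)/(y-x) dy ≤ C₂ ln(1 - η/x)`. -/
theorem stmt6 (κ₂ : ℝ → ℝ) (hκ₂loc : LocallyIntegrable κ₂)
    (hκ₂pos : ∀ y, 0 ≤ κ₂ y) (C₂ : ℝ)
    (hC₂ : ∀ y ∈ Set.Ioo (0 : ℝ) 1, ∫ ζ in (0 : ℝ)..y, κ₂ ζ ≤ C₂ * y)
    (x : ℝ) (hx : x < 0) (η : ℝ) (hη : η ∈ Set.Ioo (0 : ℝ) 1) :
    (∫ y in (0 : ℝ)..η, κ₂ y / (y - x)) ≤ C₂ * Real.log (1 - η / x) := by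
  obtain ⟨hη0, hη1⟩ := hη
  have hκm : AEStronglyMeasurable κ₂ (volume : Measure ℝ) := hκ₂loc.aestronglyMeasurable
  have hκint : IntegrableOn κ₂ (Set.Ioc 0 η) :=
    (hκ₂loc.integrableOn_isCompact (isCompact_Icc : IsCompact (Set.Icc (0:ℝ) η))).mono_set
      Set.Ioc_subset_Icc_self
  set g : ℝ → ℝ := fun t => ((t - x) ^ 2)⁻¹ with hgdef
  have hgm : Measurable g := by fun_prop
  set μ : Measure ℝ := volume.restrict (Set.Ioc 0 η) with hμdef
  haveI : IsFiniteMeasure μ := by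
    constructor
    rw [hμdef, Measure.restrict_apply_univ]
    exact measure_Ioc_lt_top
  have hsub : Set.Ioc (0:ℝ) η ⊆ Set.Ioo 0 1 := fun t ht => ⟨ht.1, lt_of_le_of_lt ht.2 hη1⟩
  have hxpos : (0:ℝ) < -x := neg_pos.2 hx
  have hηx : (0:ℝ) < η - x := by linarith
  have hC₂0 : 0 ≤ C₂ := by
    have h1 := hC₂ (1/2) (by norm_num)
    have h2 : 0 ≤ ∫ ζ in (0:ℝ)..(1/2:ℝ), κ₂ ζ :=
      intervalIntegral.integral_nonneg (by norm_num) fun u _ => hκ₂pos u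
    linarith
  -- elementary integral of g
  have hgint : ∀ a b : ℝ, 0 ≤ a → a ≤ b → (∫ t in a..b, g t) = (a - x)⁻¹ - (b - x)⁻¹ := by
    intro a b ha hab
    have ha' : 0 < a - x := by linarith
    have hb' : 0 < b - x := by linarith
    have h0 : (0:ℝ) ∉ Set.uIcc (a - x) (b - x) := by
      rw [Set.uIcc_of_le (by linarith)]
      intro h
      exact absurd h.1 (by linarith)
    calc (∫ t in a..b, g t) = ∫ t in a..b, (t - x) ^ (-2 : ℤ) := by
          refine intervalIntegral.integral_congr fun t ht => ?_
          simp only [hgdef, zpow_neg, zpow_ofNat]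
      _ = ∫ u in (a - x)..(b - x), u ^ (-2 : ℤ) :=
          (intervalIntegral.integral_comp_sub_right (fun u => u ^ (-2 : ℤ)) x)
      _ = (a - x)⁻¹ - (b - x)⁻¹ := by
          rw [integral_zpow (Or.inr ⟨by norm_num, h0⟩)]
          norm_num
          ring
  set F : ℝ → ℝ → ℝ := fun y t => Set.indicator (Set.Iic t) κ₂ y * g t with hFdef
  have hFeq : ∀ y t, F y t = κ₂ y * Set.indicator (Set.Ici y) g t := by
    intro y t
    simp only [hFdef, Set.indicator_apply, Set.mem_Iic, Set.mem_Ici]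
    by_cases h : y ≤ t <;> simp [h]
  have hFm : AEStronglyMeasurable (Function.uncurry F) (μ.prod μ) := by
    have huncurry : Function.uncurry F
        = Set.indicator {p : ℝ × ℝ | p.1 ≤ p.2} (fun p => κ₂ p.1 * g p.2) := by
      funext p
      show F p.1 p.2 = _
      simp only [hFdef, Set.indicator_apply, Set.mem_Iic, Set.mem_setOf_eq]
      by_cases h : p.1 ≤ p.2 <;> simp [h]
    rw [huncurry]
    exact AEStronglyMeasurable.indicator
      ((hκm.restrict.comp_fst).mul (hgm.aestronglyMeasurable.restrict.comp_snd))
      (isClosed_le continuous_fst continuous_snd).measurableSet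
  have hFint : Integrable (Function.uncurry F) (μ.prod μ) := by
    have hbound_int : Integrable (fun p : ℝ × ℝ => κ₂ p.1 * (x ^ 2)⁻¹) (μ.prod μ) :=
      hκint.mul_prod (integrable_const _)
    refine hbound_int.mono' hFm ?_
    have hae : ∀ᵐ p ∂(μ.prod μ), p ∈ Set.Ioc (0:ℝ) η ×ˢ Set.Ioc (0:ℝ) η := by
      rw [hμdef, Measure.prod_restrict]
      exact ae_restrict_mem (measurableSet_Ioc.prod measurableSet_Ioc)
    filter_upwards [hae] with p hp
    obtain ⟨hp1, hp2⟩ := hp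
    have h1 : 0 ≤ Set.indicator (Set.Iic p.2) κ₂ p.1 :=
      Set.indicator_nonneg (fun y _ => hκ₂pos y) _
    have h2 : Set.indicator (Set.Iic p.2) κ₂ p.1 ≤ κ₂ p.1 :=
      Set.indicator_le_self' (fun y _ => hκ₂pos y) p.1
    have hgnn : 0 ≤ g p.2 := by simp only [hgdef]; positivity
    have hgle : g p.2 ≤ (x ^ 2)⁻¹ := by
      simp only [hgdef]
      have hx2 : (0:ℝ) < x ^ 2 := by nlinarith
      refine inv_anti₀ hx2 ?_
      nlinarith [hp2.1]
    have hup : Function.uncurry F p = Set.indicator (Set.Iic p.2) κ₂ p.1 * g p.2 := rfl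
    have hnorm : ‖Function.uncurry F p‖ = Set.indicator (Set.Iic p.2) κ₂ p.1 * g p.2 := by
      rw [hup, Real.norm_eq_abs, abs_of_nonneg (mul_nonneg h1 hgnn)]
    rw [hnorm]
    exact mul_le_mul h2 hgle hgnn (hκ₂pos _)
  -- pointwise identity
  have hA : ∀ y ∈ Set.Ioc (0:ℝ) η, κ₂ y / (y - x)
      = κ₂ y * (η - x)⁻¹ + ∫ t, F y t ∂μ := by
    intro y hy
    have hyx : 0 < y - x := by linarith [hy.1]
    have hinner : (∫ t, F y t ∂μ) = κ₂ y * ((y - x)⁻¹ - (η - x)⁻¹) := by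
      have heq : ∀ t, F y t = κ₂ y * Set.indicator (Set.Ici y) g t := hFeq y
      simp_rw [heq]
      rw [MeasureTheory.integral_const_mul]
      congr 1
      rw [hμdef, MeasureTheory.integral_indicator measurableSet_Ici,
        Measure.restrict_restrict measurableSet_Ici]
      have hset : Set.Ici y ∩ Set.Ioc (0:ℝ) η = Set.Icc y η := by
        ext t
        simp only [Set.mem_inter_iff, Set.mem_Ici, Set.mem_Ioc, Set.mem_Icc]
        constructor
        · rintro ⟨h1, _, h3⟩; exact ⟨h1, h3⟩
        · rintro ⟨h1, h2⟩; exact ⟨h1, lt_of_lt_of_le hy.1 h1, h2⟩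
      rw [hset, MeasureTheory.integral_Icc_eq_integral_Ioc,
        ← intervalIntegral.integral_of_le hy.2, hgint y η (le_of_lt hy.1) hy.2]
    rw [hinner, div_eq_mul_inv]
    ring
  -- split the integral
  have hIeq : (∫ y in (0:ℝ)..η, κ₂ y / (y - x))
      = (∫ y, κ₂ y ∂μ) * (η - x)⁻¹ + ∫ y, (∫ t, F y t ∂μ) ∂μ := by
    rw [intervalIntegral.integral_of_le (le_of_lt hη0)]
    have hcongr : (∫ y in Set.Ioc (0:ℝ) η, κ₂ y / (y - x))
        = ∫ y in Set.Ioc (0:ℝ) η, (κ₂ y * (η - x)⁻¹ + ∫ t, F y t ∂μ) :=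
      setIntegral_congr_fun measurableSet_Ioc fun y hy => hA y hy
    rw [hcongr]
    have hinn : Integrable (fun y => ∫ t, F y t ∂μ) μ := hFint.integral_prod_left
    rw [integral_add (hκint.mul_const _) hinn, MeasureTheory.integral_mul_const]
  -- swap the double integral
  have hswap : (∫ y, (∫ t, F y t ∂μ) ∂μ)
      = ∫ t, (∫ y in Set.Ioc (0:ℝ) t, κ₂ y) * g t ∂μ := by
    rw [MeasureTheory.integral_integral_swap hFint]
    rw [hμdef]
    refine setIntegral_congr_fun measurableSet_Ioc fun t ht => ?_
    simp only [hFdef]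
    rw [MeasureTheory.integral_mul_const]
    congr 1
    rw [MeasureTheory.integral_indicator measurableSet_Iic,
      Measure.restrict_restrict measurableSet_Iic]
    have hset2 : Set.Iic t ∩ Set.Ioc (0:ℝ) η = Set.Ioc 0 t := by
      ext y
      simp only [Set.mem_inter_iff, Set.mem_Iic, Set.mem_Ioc]
      constructor
      · rintro ⟨h1, h2, _⟩; exact ⟨h2, h1⟩
      · rintro ⟨h1, h2⟩; exact ⟨h2, h1, le_trans h2 ht.2⟩
    rw [hset2]
  -- the bound on partial integrals of κ₂
  have hK : ∀ t ∈ Set.Ioc (0:ℝ) η, (∫ y in Set.Ioc (0:ℝ) t, κ₂ y) ≤ C₂ * t := by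
    intro t ht
    have := hC₂ t (hsub ht)
    rwa [intervalIntegral.integral_of_le (le_of_lt ht.1)] at this
  -- integrability of the comparison function
  have hcont : ContinuousOn (fun t : ℝ => C₂ * t * g t) (Set.Icc 0 η) := by
    simp only [hgdef]
    refine ContinuousOn.mul (by fun_prop) ?_
    refine ContinuousOn.inv₀ (by fun_prop) fun t ht => ?_
    have : 0 < t - x := by linarith [ht.1]
    positivity
  have hrhs_int : Integrable (fun t : ℝ => C₂ * t * g t) μ := by
    rw [hμdef]
    exact (hcont.integrableOn_compact isCompact_Icc).mono_set Set.Ioc_subset_Icc_self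
  -- the monotone bound
  have hD : (∫ t, (∫ y in Set.Ioc (0:ℝ) t, κ₂ y) * g t ∂μ) ≤ ∫ t, C₂ * t * g t ∂μ := by
    refine integral_mono_of_nonneg ?_ hrhs_int ?_
    · refine Filter.Eventually.of_forall fun t => ?_
      have h1 : 0 ≤ ∫ y in Set.Ioc (0:ℝ) t, κ₂ y :=
        setIntegral_nonneg measurableSet_Ioc fun y _ => hκ₂pos y
      have h2 : 0 ≤ g t := by simp only [hgdef]; positivity
      exact mul_nonneg h1 h2
    · rw [hμdef]
      filter_upwards [ae_restrict_mem measurableSet_Ioc] with t ht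
      have h2 : 0 ≤ g t := by simp only [hgdef]; positivity
      exact mul_le_mul_of_nonneg_right (hK t ht) h2
  -- compute the comparison integral
  have hE : (∫ t, C₂ * t * g t ∂μ)
      = C₂ * (Real.log ((η - x) / (-x)) - 1 - x * (η - x)⁻¹) := by
    rw [hμdef, ← intervalIntegral.integral_of_le (le_of_lt hη0)]
    have hsplit : (∫ t in (0:ℝ)..η, C₂ * t * g t)
        = C₂ * ∫ t in (0:ℝ)..η, ((t - x)⁻¹ + x * g t) := by
      rw [← intervalIntegral.integral_const_mul]
      refine intervalIntegral.integral_congr fun t ht => ?_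
      rw [Set.uIcc_of_le (le_of_lt hη0)] at ht
      have htx : 0 < t - x := by linarith [ht.1]
      simp only [hgdef]
      field_simp
      ring
    rw [hsplit]
    congr 1
    have hi1 : IntervalIntegrable (fun t : ℝ => (t - x)⁻¹) volume 0 η := by
      apply ContinuousOn.intervalIntegrable
      rw [Set.uIcc_of_le (le_of_lt hη0)]
      refine ContinuousOn.inv₀ (by fun_prop) fun t ht => ?_
      have : 0 < t - x := by linarith [ht.1]
      positivity
    have hi2 : IntervalIntegrable (fun t : ℝ => x * g t) volume 0 η := by
      apply ContinuousOn.intervalIntegrable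
      rw [Set.uIcc_of_le (le_of_lt hη0), hgdef]
      refine ContinuousOn.mul continuousOn_const ?_
      refine ContinuousOn.inv₀ (by fun_prop) fun t ht => ?_
      have : 0 < t - x := by linarith [ht.1]
      positivity
    rw [intervalIntegral.integral_add hi1 hi2]
    have h1 : (∫ t in (0:ℝ)..η, (t - x)⁻¹) = Real.log ((η - x) / (-x)) := by
      have := intervalIntegral.integral_comp_sub_right (fun u : ℝ => u⁻¹) x (a := 0) (b := η)
      rw [this, integral_inv]
      · norm_num
      · rw [Set.uIcc_of_le (by linarith)]
        intro h
        simp only [Set.mem_Icc] at h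
        linarith [h.1]
    have h2 : (∫ t in (0:ℝ)..η, x * g t) = x * ((0 - x)⁻¹ - (η - x)⁻¹) := by
      rw [intervalIntegral.integral_const_mul, hgint 0 η le_rfl (le_of_lt hη0)]
    rw [h1, h2]
    have hxne : x ≠ 0 := ne_of_lt hx
    field_simp
    ring
  -- assemble
  have hfirst : (∫ y, κ₂ y ∂μ) * (η - x)⁻¹ ≤ C₂ * η * (η - x)⁻¹ := by
    refine mul_le_mul_of_nonneg_right ?_ (by positivity)
    exact hK η ⟨hη0, le_rfl⟩
  have hlog : Real.log ((η - x) / (-x)) = Real.log (1 - η / x) := by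
    have hxne : x ≠ 0 := ne_of_lt hx
    congr 1
    field_simp
    ring
  have hfinal : C₂ * η * (η - x)⁻¹ + C₂ * (Real.log ((η - x) / (-x)) - 1 - x * (η - x)⁻¹)
      = C₂ * Real.log (1 - η / x) := by
    rw [hlog]
    have hne : η - x ≠ 0 := ne_of_gt hηx
    field_simp
    ring
  calc (∫ y in (0:ℝ)..η, κ₂ y / (y - x))
      = (∫ y, κ₂ y ∂μ) * (η - x)⁻¹ + ∫ y, (∫ t, F y t ∂μ) ∂μ := hIeq
    _ ≤ C₂ * η * (η - x)⁻¹ + ∫ t, C₂ * t * g t ∂μ := by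
        rw [hswap]
        exact add_le_add hfirst hD
    _ = C₂ * η * (η - x)⁻¹ + C₂ * (Real.log ((η - x) / (-x)) - 1 - x * (η - x)⁻¹) := by
        rw [hE]
    _ = C₂ * Real.log (1 - η / x) := hfinal
end
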